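/- Let F be any field, G any finite group, f a nonzero element of the group algebra F G. Then |supp(f)| · dim_F (F G·f) = |G| if and only if supp(f) = γH is a left coset of a subgroup H ≤ G and there exist a group homomorphism η: H → Fˣ and c ∈ Fˣ such that f(γβ) = c·η(β) for all β ∈ H. -/

import Mathlib

open Pointwise Module MonoidAlgebra

theorem exists_sep {G F : Type*} [Fintype G] [Nonempty G] [Field F]
    (W : Submodule F (MonoidAlgebra F G)) :
    ∃ X : Finset G, X.card ≤ finrank F W ∧
      ∀ v ∈ W, (∀ x ∈ X, v.coeff x = 0) → v = 0 := by
  classical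
  haveI : Module.Finite F (MonoidAlgebra F G) :=
    Module.Finite.equiv ((MonoidAlgebra.coeffLinearEquiv F).trans (Finsupp.linearEquivFunOnFinite F F G)).symm
  let ε : G → Module.Dual F W := fun g =>
    ((Finsupp.lapply g : (G →₀ F) →ₗ[F] F).comp ((MonoidAlgebra.coeffLinearEquiv F).toLinearMap.comp W.subtype))
  have hker : ∀ v : W, (∀ g : G, ε g v = 0) → v = 0 := by
    intro v hv
    have : (v : MonoidAlgebra F G) = 0 := MonoidAlgebra.ext (Finsupp.ext fun g => hv g)
    exact Subtype.ext this
  have hcoann : (Submodule.span F (Set.range ε)).dualCoannihilator = ⊥ := by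
    rw [eq_bot_iff]
    intro v hv
    rw [Submodule.mem_dualCoannihilator] at hv
    exact hker v fun g => hv (ε g) (Submodule.subset_span ⟨g, rfl⟩)
  have htop : Submodule.span F (Set.range ε) = ⊤ := by
    apply Submodule.eq_top_of_finrank_eq
    have h1 := Subspace.finrank_add_finrank_dualCoannihilator_eq
      (Submodule.span F (Set.range ε))
    rw [hcoann, finrank_bot, add_zero] at h1
    rw [h1, Subspace.dual_finrank_eq]
  obtain ⟨b, hbsub, hbspan, hbind⟩ := exists_linearIndependent F (Set.range ε)
  have hbfin : b.Finite := hbind.setFinite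
  have hpre : ∀ φ ∈ b, ∃ g : G, ε g = φ := fun φ hφ => hbsub hφ
  choose! t ht using hpre
  refine ⟨hbfin.toFinset.image t, ?_, ?_⟩
  · calc (hbfin.toFinset.image t).card ≤ hbfin.toFinset.card := Finset.card_image_le
      _ ≤ finrank F (Module.Dual F W) := by
          haveI := hbfin.fintype
          rw [Set.Finite.card_toFinset]
          exact hbind.fintype_card_le_finrank
      _ = finrank F W := Subspace.dual_finrank_eq
  · intro v hv h0
    have hφ : ∀ φ : Module.Dual F W, φ ⟨v, hv⟩ = 0 := by
      intro φ
      have : φ ∈ Submodule.span F b := by rw [hbspan, htop]; trivial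
      induction this using Submodule.span_induction with
      | mem ψ hψ =>
          have : ε (t ψ) = ψ := ht ψ hψ
          rw [← this]
          exact h0 _ (Finset.mem_image.2 ⟨ψ, hbfin.mem_toFinset.2 hψ, rfl⟩)
      | zero => simp
      | add _ _ _ _ h1 h2 => simp [h1, h2]
      | smul c _ _ h1 => simp [h1]
    have := (Module.forall_dual_apply_eq_zero_iff F (⟨v, hv⟩ : W)).1 hφ
    exact congrArg Subtype.val this

theorem cover_lemma {G F : Type*} [Group G] [Fintype G] [Field F]
    (f : MonoidAlgebra F G) (hf : f ≠ 0) :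
    ∃ X : Finset G,
      X.card ≤ finrank F ((Submodule.span (MonoidAlgebra F G) {f}).restrictScalars F) ∧
      (∀ v ∈ (Submodule.span (MonoidAlgebra F G) {f}).restrictScalars F,
        (∀ x ∈ X, v.coeff x = 0) → v = 0) ∧
      ∀ g : G, ∃ x ∈ X, f.coeff (g⁻¹ * x) ≠ 0 := by
  classical
  obtain ⟨X, hX1, hsep⟩ := exists_sep ((Submodule.span (MonoidAlgebra F G) {f}).restrictScalars F)
  refine ⟨X, hX1, hsep, fun g => ?_⟩
  have hmem : single g (1:F) * f ∈ (Submodule.span (MonoidAlgebra F G) {f}).restrictScalars F := by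
    rw [Submodule.restrictScalars_mem]
    simpa [smul_eq_mul] using
      Submodule.smul_mem _ (single g (1:F)) (Submodule.mem_span_singleton_self f)
  have hne : single g (1:F) * f ≠ 0 := by
    intro h0
    apply hf
    have : single g⁻¹ (1:F) * (single g (1:F) * f) = f := by
      rw [← mul_assoc, single_mul_single, inv_mul_cancel, mul_one, ← one_def, one_mul]
    rw [h0, mul_zero] at this
    exact this.symm
  by_contra hcon
  push_neg at hcon
  apply hne
  apply hsep _ hmem
  intro x hx
  rw [coeff_single_mul_apply, one_mul]
  exact hcon x hx

theorem card_le_lemma {G F : Type*} [Group G] [Fintype G] [Field F]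
    (f : MonoidAlgebra F G) (hf : f ≠ 0) :
    Fintype.card G ≤ f.coeff.support.card *
      finrank F ((Submodule.span (MonoidAlgebra F G) {f}).restrictScalars F) := by
  classical
  obtain ⟨X, hX1, -, hcov⟩ := cover_lemma f hf
  have hsub : Finset.univ ⊆ X.biUnion (fun x => f.coeff.support.image (fun s => x * s⁻¹)) := by
    intro g _
    obtain ⟨x, hx, hne⟩ := hcov g
    refine Finset.mem_biUnion.2 ⟨x, hx, Finset.mem_image.2 ⟨g⁻¹ * x, ?_, by group⟩⟩
    exact Finsupp.mem_support_iff.2 hne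
  calc Fintype.card G ≤ (X.biUnion (fun x => f.coeff.support.image (fun s => x * s⁻¹))).card :=
        Finset.card_le_card hsub
    _ ≤ ∑ x ∈ X, (f.coeff.support.image (fun s => x * s⁻¹)).card := Finset.card_biUnion_le
    _ ≤ ∑ x ∈ X, f.coeff.support.card := Finset.sum_le_sum fun x _ => Finset.card_image_le
    _ = X.card * f.coeff.support.card := by rw [Finset.sum_const, smul_eq_mul]
    _ ≤ _ * f.coeff.support.card := Nat.mul_le_mul_right _ hX1
    _ = _ := Nat.mul_comm _ _

theorem converse_lemma {G F : Type*} [Group G] [Fintype G] [Field F]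
    (f : MonoidAlgebra F G) (hf : f ≠ 0) (H : Subgroup G) (γ : G) (η : H →* Fˣ) (c : Fˣ)
    (hsupp : (f.coeff.support : Set G) = γ • (H : Set G))
    (hval : ∀ β : H, f.coeff (γ * β) = (c : F) * (η β : F)) :
    f.coeff.support.card * finrank F ((Submodule.span (MonoidAlgebra F G) {f}).restrictScalars F)
      = Fintype.card G := by
  classical
  haveI : Module.Finite F (MonoidAlgebra F G) :=
    Module.Finite.equiv ((MonoidAlgebra.coeffLinearEquiv F).trans (Finsupp.linearEquivFunOnFinite F F G)).symm
  have hsupp' : ∀ g : G, f.coeff g ≠ 0 ↔ γ⁻¹ * g ∈ H := by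
    intro g
    rw [← Finsupp.mem_support_iff, ← Finset.mem_coe, hsupp]
    rw [Set.mem_smul_set_iff_inv_smul_mem]
    rfl
  -- |S| = |H|
  have hScard : f.coeff.support.card = Nat.card H := by
    rw [← Set.ncard_coe_finset, hsupp]
    rw [← Set.image_smul, Set.ncard_image_of_injective _ (MulAction.injective γ),
      ← Nat.card_coe_set_eq]
    rfl
  set H' : Subgroup G := Subgroup.map (MulAut.conj γ).toMonoidHom H with hH'def
  have hH' : ∀ h' : G, h' ∈ H' ↔ γ⁻¹ * h' * γ ∈ H := by
    intro h'
    rw [hH'def, Subgroup.mem_map]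
    constructor
    · rintro ⟨b, hb, rfl⟩
      simpa [MulAut.conj_apply, mul_assoc] using hb
    · intro hb
      exact ⟨γ⁻¹ * h' * γ, hb, by simp [MulAut.conj_apply]; group⟩
  have key : ∀ h' : G, h' ∈ H' → ∃ μ : F, μ ≠ 0 ∧ single h' (1:F) * f = μ • f := by
    intro h' hh'
    rw [hH'] at hh'
    set β : H := ⟨γ⁻¹ * h' * γ, hh'⟩ with hβ
    have hβval : (β : G) = γ⁻¹ * h' * γ := rfl
    refine ⟨((η β)⁻¹ : Fˣ), Units.ne_zero _, MonoidAlgebra.ext <| Finsupp.ext fun y => ?_⟩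
    rw [coeff_single_mul_apply, one_mul, coeff_smul_apply, smul_eq_mul]
    by_cases hy : γ⁻¹ * y ∈ H
    · set β' : H := ⟨γ⁻¹ * y, hy⟩ with hβ'
      have hy' : y = γ * (β' : G) := by rw [hβ']; simp
      have h1 : h'⁻¹ * y = γ * ((β⁻¹ * β' : H) : G) := by
        push_cast; rw [hβval, hy']
        group
      rw [h1, hval, hy', hval, map_mul, map_inv]
      push_cast
      ring
    · have h0 : f.coeff y = 0 := by
        by_contra h
        exact hy ((hsupp' y).mp h)
      have h0' : f.coeff (h'⁻¹ * y) = 0 := by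
        by_contra h
        have := (hsupp' _).mp h
        apply hy
        have : (β : G) * (γ⁻¹ * (h'⁻¹ * y)) ∈ H := H.mul_mem β.2 this
        convert this using 1
        rw [hβval]
        group
      rw [h0, h0', mul_zero]
  -- spanning by coset representatives
  let u : G ⧸ H' → MonoidAlgebra F G := fun q => single q.out (1:F) * f
  have hgen : ∀ g : G, single g (1:F) * f ∈ Submodule.span F (Set.range u) := by
    intro g
    set q : G ⧸ H' := QuotientGroup.mk g with hq
    have hmk : (QuotientGroup.mk q.out : G ⧸ H') = QuotientGroup.mk g :=
      QuotientGroup.out_eq' q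
    have hmem : q.out⁻¹ * g ∈ H' := QuotientGroup.eq.mp hmk
    obtain ⟨μ, hμ0, hμ⟩ := key _ hmem
    have : single g (1:F) * f = μ • u q := by
      have h1 : single g (1:F) = single q.out (1:F) * single (q.out⁻¹ * g) (1:F) := by
        rw [single_mul_single, mul_one, mul_inv_cancel_left]
      rw [h1, mul_assoc, hμ, mul_smul_comm]
    rw [this]
    exact Submodule.smul_mem _ _ (Submodule.subset_span ⟨q, rfl⟩)
  have hle : (Submodule.span (MonoidAlgebra F G) {f}).restrictScalars F ≤
      Submodule.span F (Set.range u) := by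
    intro v hv
    rw [Submodule.restrictScalars_mem, Submodule.mem_span_singleton] at hv
    obtain ⟨a, rfl⟩ := hv
    rw [smul_eq_mul]
    have : a * f = ∑ g ∈ a.coeff.support, a.coeff g • (single g (1:F) * f) := by
      conv_lhs => rw [← MonoidAlgebra.sum_single a]
      rw [Finsupp.sum, Finset.sum_mul]
      refine Finset.sum_congr rfl fun g _ => ?_
      rw [← smul_mul_assoc, MonoidAlgebra.smul_single', mul_one]
    rw [this]
    exact Submodule.sum_mem _ fun g _ => Submodule.smul_mem _ _ (hgen g)
  have hdle : finrank F ((Submodule.span (MonoidAlgebra F G) {f}).restrictScalars F)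
      ≤ Nat.card (G ⧸ H') := by
    calc finrank F ((Submodule.span (MonoidAlgebra F G) {f}).restrictScalars F)
        ≤ finrank F (Submodule.span F (Set.range u)) := Submodule.finrank_mono hle
      _ ≤ Fintype.card (G ⧸ H') := finrank_range_le_card u
      _ = Nat.card (G ⧸ H') := (Nat.card_eq_fintype_card).symm
  have hH'card : Nat.card H' = Nat.card H := by
    rw [hH'def]
    exact (Nat.card_congr (H.equivMapOfInjective _ (MulAut.conj γ).injective).toEquiv).symm
  have hcardG : Nat.card G = Nat.card (G ⧸ H') * Nat.card H' :=
    Subgroup.card_eq_card_quotient_mul_card_subgroup H'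
  have hub : f.coeff.support.card *
      finrank F ((Submodule.span (MonoidAlgebra F G) {f}).restrictScalars F)
      ≤ Fintype.card G := by
    calc f.coeff.support.card * finrank F ((Submodule.span (MonoidAlgebra F G) {f}).restrictScalars F)
        ≤ Nat.card H * Nat.card (G ⧸ H') := by
          rw [hScard]; exact Nat.mul_le_mul_left _ hdle
      _ = Nat.card G := by rw [hcardG, hH'card, Nat.mul_comm]
      _ = Fintype.card G := Nat.card_eq_fintype_card
  exact le_antisymm hub (card_le_lemma f hf)

theorem forward_lemma {G F : Type*} [Group G] [Fintype G] [Field F]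
    (f : MonoidAlgebra F G) (hf : f ≠ 0)
    (h : f.coeff.support.card *
        finrank F ((Submodule.span (MonoidAlgebra F G) {f}).restrictScalars F)
      = Fintype.card G) :
    ∃ (H : Subgroup G) (γ : G) (η : H →* Fˣ) (c : Fˣ),
      (f.coeff.support : Set G) = γ • (H : Set G) ∧
      ∀ β : H, f.coeff (γ * β) = (c : F) * (η β : F) := by
  classical
  obtain ⟨X, hX1, hsep, hcov⟩ := cover_lemma f hf
  set V := (Submodule.span (MonoidAlgebra F G) {f}).restrictScalars F with hVdef
  set S := f.coeff.support with hSdef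
  set B : G → Finset G := fun x => S.image (fun s => x * s⁻¹) with hBdef
  have hB : ∀ g x : G, g ∈ B x ↔ f.coeff (g⁻¹ * x) ≠ 0 := by
    intro g x
    rw [hBdef]
    simp only [Finset.mem_image]
    constructor
    · rintro ⟨s, hs, rfl⟩
      have : (x * s⁻¹)⁻¹ * x = s := by group
      rw [this]
      exact Finsupp.mem_support_iff.mp hs
    · intro hne
      exact ⟨g⁻¹ * x, Finsupp.mem_support_iff.mpr hne, by group⟩
  -- counting: the fibers have card exactly 1
  have hBcard : ∀ x, (B x).card = S.card := fun x =>
    Finset.card_image_of_injective _ (fun a b hab => inv_injective (mul_left_cancel hab))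
  have hsum1 : Fintype.card G ≤ ∑ x ∈ X, (B x).card := by
    have hsub : Finset.univ ⊆ X.biUnion B := by
      intro g _
      obtain ⟨x, hx, hne⟩ := hcov g
      exact Finset.mem_biUnion.2 ⟨x, hx, (hB g x).2 hne⟩
    calc Fintype.card G ≤ (X.biUnion B).card := Finset.card_le_card hsub
      _ ≤ ∑ x ∈ X, (B x).card := Finset.card_biUnion_le
  have hsum2 : ∑ x ∈ X, (B x).card ≤ Fintype.card G := by
    calc ∑ x ∈ X, (B x).card = X.card * S.card := by
          rw [Finset.sum_congr rfl fun x _ => hBcard x, Finset.sum_const, smul_eq_mul]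
      _ ≤ finrank F V * S.card := Nat.mul_le_mul_right _ hX1
      _ = Fintype.card G := by rw [Nat.mul_comm]; exact h
  have hsum : ∑ x ∈ X, (B x).card = Fintype.card G := le_antisymm hsum2 hsum1
  have hswap : ∑ x ∈ X, (B x).card = ∑ g : G, (X.filter (fun x => g ∈ B x)).card := by
    calc ∑ x ∈ X, (B x).card
        = ∑ x ∈ X, ∑ g : G, (if g ∈ B x then 1 else 0) := by
          refine Finset.sum_congr rfl fun x _ => ?_
          rw [← Finset.card_filter, Finset.filter_univ_mem]
      _ = ∑ g : G, ∑ x ∈ X, (if g ∈ B x then 1 else 0) := Finset.sum_comm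
      _ = ∑ g : G, (X.filter (fun x => g ∈ B x)).card := by
          refine Finset.sum_congr rfl fun g _ => ?_
          rw [Finset.card_filter]
  have hone : ∀ g : G, 1 ≤ (X.filter (fun x => g ∈ B x)).card := by
    intro g
    obtain ⟨x, hx, hne⟩ := hcov g
    exact Finset.card_pos.2 ⟨x, Finset.mem_filter.2 ⟨hx, (hB g x).2 hne⟩⟩
  have huniq : ∀ g : G, (X.filter (fun x => g ∈ B x)).card = 1 := by
    have hsum3 : ∑ g : G, (1 : ℕ) = ∑ g : G, (X.filter (fun x => g ∈ B x)).card := by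
      rw [← hswap, hsum, Finset.sum_const, smul_eq_mul, mul_one, Finset.card_univ]
    intro g
    exact ((Finset.sum_eq_sum_iff_of_le (fun i _ => hone i)).mp hsum3 g
      (Finset.mem_univ g)).symm
  have hex : ∀ g : G, ∃! x, x ∈ X ∧ g ∈ B x := by
    intro g
    obtain ⟨a, ha⟩ := Finset.card_eq_one.mp (huniq g)
    have hamem := Finset.mem_filter.mp (ha ▸ Finset.mem_singleton_self a)
    refine ⟨a, hamem, fun y hy => ?_⟩
    have : y ∈ X.filter (fun x => g ∈ B x) := Finset.mem_filter.2 hy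
    rw [ha, Finset.mem_singleton] at this
    exact this
  obtain ⟨x0, ⟨hx0X, hx0B⟩, hx0u⟩ := hex 1
  have hfx0 : f.coeff x0 ≠ 0 := by
    have := (hB 1 x0).1 hx0B
    simpa using this
  have hzero : ∀ x ∈ X, x ≠ x0 → f.coeff x = 0 := by
    intro x hx hxne
    by_contra hc
    exact hxne (hx0u x ⟨hx, (hB 1 x).2 (by simpa using hc)⟩)
  have hfV : f ∈ V := by
    rw [hVdef, Submodule.restrictScalars_mem]
    exact Submodule.mem_span_singleton_self f
  have hgfV : ∀ g : G, single g (1:F) * f ∈ V := by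
    intro g
    rw [hVdef, Submodule.restrictScalars_mem]
    simpa [smul_eq_mul] using
      Submodule.smul_mem _ (single g (1:F)) (Submodule.mem_span_singleton_self f)
  set lam : G → F := fun g => f.coeff (g⁻¹ * x0) / f.coeff x0 with hlamdef
  -- Claim A
  have hlam : ∀ g : G, f.coeff (g⁻¹ * x0) ≠ 0 → single g (1:F) * f = lam g • f := by
    intro g hg
    have hgx : ∀ x ∈ X, x ≠ x0 → f.coeff (g⁻¹ * x) = 0 := by
      intro x hx hxne
      by_contra hc
      obtain ⟨a, -, hau⟩ := hex g
      exact hxne ((hau x ⟨hx, (hB g x).2 hc⟩).trans (hau x0 ⟨hx0X, (hB g x0).2 hg⟩).symm)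
    have hw0 : f.coeff x0 • (single g (1:F) * f) - f.coeff (g⁻¹ * x0) • f = 0 := by
      apply hsep _ (Submodule.sub_mem _ (Submodule.smul_mem _ _ (hgfV g))
        (Submodule.smul_mem _ _ hfV))
      intro x hx
      rw [coeff_sub, Finsupp.sub_apply, coeff_smul_apply, coeff_smul_apply, coeff_single_mul_apply,
        one_mul, smul_eq_mul, smul_eq_mul]
      by_cases hxx : x = x0
      · subst hxx; ring
      · rw [hzero x hx hxx, hgx x hx hxx, mul_zero, mul_zero, sub_zero]
    have h1 : f.coeff x0 • (single g (1:F) * f) = f.coeff (g⁻¹ * x0) • f := sub_eq_zero.mp hw0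
    have h2 := congrArg (fun v => (f.coeff x0)⁻¹ • v) h1
    simpa [smul_smul, inv_mul_cancel₀ hfx0, hlamdef, div_eq_inv_mul, mul_comm] using h2
  -- Claim B
  have hlamB : ∀ (g : G) (μ : F), single g (1:F) * f = μ • f → f.coeff (g⁻¹ * x0) = μ * f.coeff x0 := by
    intro g μ hμ
    have := congrArg (fun v : MonoidAlgebra F G => v.coeff x0) hμ
    simpa [coeff_single_mul_apply] using this
  have hlamne : ∀ g : G, f.coeff (g⁻¹ * x0) ≠ 0 → lam g ≠ 0 := fun g hg => div_ne_zero hg hfx0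
  have hsmul_cancel : ∀ μ μ' : F, μ • f = μ' • f → μ = μ' := by
    intro μ μ' hμ
    have : (μ - μ') • f = 0 := by rw [sub_smul, hμ, sub_self]
    rcases smul_eq_zero.mp this with h | h
    · exact sub_eq_zero.mp h
    · exact absurd h hf
  have hmul_lam : ∀ a b : G, f.coeff (a⁻¹ * x0) ≠ 0 → f.coeff (b⁻¹ * x0) ≠ 0 →
      single (a * b) (1:F) * f = (lam a * lam b) • f := by
    intro a b ha hb
    have : single (a*b) (1:F) = single a (1:F) * single b (1:F) := by
      rw [single_mul_single, mul_one]
    rw [this, mul_assoc, hlam b hb, mul_smul_comm, hlam a ha, smul_smul, mul_comm (lam b)]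
  -- the subgroup H'
  let H' : Subgroup G :=
    { carrier := {g : G | f.coeff (g⁻¹ * x0) ≠ 0}
      one_mem' := by simpa using hfx0
      mul_mem' := by
        intro a b ha hb
        have h1 := hlamB _ _ (hmul_lam a b ha hb)
        simp only [Set.mem_setOf_eq] at *
        rw [h1]
        exact mul_ne_zero (mul_ne_zero (hlamne a ha) (hlamne b hb)) hfx0
      inv_mem' := by
        intro a ha
        simp only [Set.mem_setOf_eq] at *
        have h1 := hlam a ha
        have h2 : single a⁻¹ (1:F) * (single a (1:F) * f) = f := by
          rw [← mul_assoc, single_mul_single, inv_mul_cancel, mul_one, ← one_def, one_mul]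
        rw [h1, mul_smul_comm] at h2
        have h3 : single a⁻¹ (1:F) * f = (lam a)⁻¹ • f :=
          (eq_inv_smul_iff₀ (hlamne a ha)).mpr h2
        have h4 := hlamB _ _ h3
        rw [inv_inv]
        rw [inv_inv] at h4
        rw [h4]
        exact mul_ne_zero (inv_ne_zero (hlamne a ha)) hfx0 }
  have hmemH' : ∀ g : G, g ∈ H' ↔ f.coeff (g⁻¹ * x0) ≠ 0 := fun g => Iff.rfl
  -- stability of support
  have hstab : ∀ g ∈ H', ∀ s : G, f.coeff s ≠ 0 → f.coeff (g * s) ≠ 0 := by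
    intro g hg s hs
    have h1 := congrArg (fun v : MonoidAlgebra F G => v.coeff (g * s)) (hlam g ((hmemH' g).1 hg))
    simp only [coeff_single_mul_apply, one_mul, inv_mul_cancel_left, coeff_smul_apply, smul_eq_mul] at h1
    have h2 : f.coeff s = lam g * f.coeff (g * s) := by rw [h1]
    intro hc
    rw [hc, mul_zero] at h2
    exact hs h2
  -- T = B x0, so |H'| = |S|
  set T := Finset.univ.filter (fun g => g ∈ H') with hTdef
  have hT : T = B x0 := by
    ext g
    rw [hTdef, Finset.mem_filter, hB]
    simp [hmemH']
  have hTcard : T.card = S.card := by rw [hT, hBcard]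
  -- γ
  obtain ⟨γ, hγS⟩ := Finsupp.support_nonempty_iff.mpr (mt coeff_eq_zero.mp hf)
  have hfγ : f.coeff γ ≠ 0 := Finsupp.mem_support_iff.mp hγS
  have himg : T.image (fun h => h * γ) = S := by
    apply Finset.eq_of_subset_of_card_le
    · intro g hg
      obtain ⟨t, ht, rfl⟩ := Finset.mem_image.mp hg
      have htH' : t ∈ H' := (Finset.mem_filter.mp ht).2
      exact Finsupp.mem_support_iff.mpr (hstab t htH' γ hfγ)
    · rw [Finset.card_image_of_injective _ (fun a b hab => mul_right_cancel hab), hTcard]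
  set H : Subgroup G := Subgroup.map (MulAut.conj γ⁻¹).toMonoidHom H' with hHdef
  have hmemH : ∀ b : G, b ∈ H ↔ γ * b * γ⁻¹ ∈ H' := by
    intro b
    rw [hHdef, Subgroup.mem_map]
    constructor
    · rintro ⟨a, ha, rfl⟩
      have : γ * ((MulAut.conj γ⁻¹).toMonoidHom a) * γ⁻¹ = a := by
        simp [MulAut.conj_apply]
        group
      rw [this]
      exact ha
    · intro hb
      refine ⟨γ * b * γ⁻¹, hb, ?_⟩
      simp [MulAut.conj_apply]
      group
  have hSmem : ∀ g : G, g ∈ S ↔ g * γ⁻¹ ∈ H' := by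
    intro g
    rw [← himg, Finset.mem_image]
    constructor
    · rintro ⟨t, ht, rfl⟩
      have : t * γ * γ⁻¹ = t := by group
      rw [this]
      exact (Finset.mem_filter.mp ht).2
    · intro hb
      exact ⟨g * γ⁻¹, Finset.mem_filter.2 ⟨Finset.mem_univ _, hb⟩, by group⟩
  have hSset : (S : Set G) = γ • (H : Set G) := by
    ext g
    rw [Set.mem_smul_set_iff_inv_smul_mem]
    rw [Finset.mem_coe, hSmem]
    have h2 : (γ⁻¹ • g) ∈ (H : Set G) ↔ γ⁻¹ * g ∈ H := Iff.rfl
    rw [h2, hmemH]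
    have h3 : γ * (γ⁻¹ * g) * γ⁻¹ = g * γ⁻¹ := by group
    rw [h3]
  have hγβmem : ∀ β : H, γ * (β : G) ∈ S := by
    intro β
    rw [hSmem]
    have h1 : γ * (β : G) * γ⁻¹ ∈ H' := (hmemH (β : G)).1 β.2
    rwa [mul_assoc] at h1 ⊢
  have hγβ : ∀ β : H, f.coeff (γ * (β : G)) ≠ 0 := fun β => Finsupp.mem_support_iff.mp (hγβmem β)
  have feval : ∀ a : G, a ∈ H' → f.coeff γ = lam a * f.coeff (a * γ) := by
    intro a ha
    have h1 := congrArg (fun v : MonoidAlgebra F G => v.coeff (a * γ)) (hlam a ((hmemH' a).1 ha))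
    simp only [coeff_single_mul_apply, one_mul, inv_mul_cancel_left] at h1
    exact h1.trans rfl
  have lam_mul : ∀ a b : G, a ∈ H' → b ∈ H' → lam (a * b) = lam a * lam b := by
    intro a b ha hb
    have h1 := hmul_lam a b ((hmemH' a).1 ha) ((hmemH' b).1 hb)
    have h2 := hlam (a * b) ((hmemH' _).1 (H'.mul_mem ha hb))
    exact hsmul_cancel _ _ (h2.symm.trans h1)
  have hom : ∀ β β' : H, f.coeff (γ * ((β * β' : H) : G)) * f.coeff γ = f.coeff (γ * β) * f.coeff (γ * β') := by
    intro β β'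
    have haH : γ * (β : G) * γ⁻¹ ∈ H' := (hmemH _).1 β.2
    have hbH : γ * (β' : G) * γ⁻¹ ∈ H' := (hmemH _).1 β'.2
    have e1 := feval _ haH
    have e2 := feval _ hbH
    have e3 := feval _ (H'.mul_mem haH hbH)
    rw [lam_mul _ _ haH hbH] at e3
    have r1 : (γ * (β : G) * γ⁻¹) * γ = γ * (β : G) := by group
    have r2 : (γ * (β' : G) * γ⁻¹) * γ = γ * (β' : G) := by group
    have r3 : ((γ * (β : G) * γ⁻¹) * (γ * (β' : G) * γ⁻¹)) * γ
        = γ * ((β * β' : H) : G) := by push_cast; group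
    rw [r1] at e1
    rw [r2] at e2
    rw [r3] at e3
    have la : lam (γ * (β : G) * γ⁻¹) = f.coeff γ / f.coeff (γ * (β : G)) :=
      (eq_div_iff (hγβ β)).2 e1.symm
    have lb : lam (γ * (β' : G) * γ⁻¹) = f.coeff γ / f.coeff (γ * (β' : G)) :=
      (eq_div_iff (hγβ β')).2 e2.symm
    rw [la, lb] at e3
    field_simp [hγβ β, hγβ β', hfγ] at e3
    push_cast
    have e4 : f.coeff (γ * (β : G)) * f.coeff (γ * (β' : G)) = f.coeff γ * f.coeff (γ * ((β : G) * (β' : G))) :=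
      mul_left_cancel₀ hfγ (by linear_combination (f.coeff γ) * e3)
    linear_combination -e4
  refine ⟨H, γ,
    { toFun := fun β => Units.mk0 (f.coeff (γ * β) / f.coeff γ) (div_ne_zero (hγβ β) hfγ)
      map_one' := by
        ext
        simp only [Units.val_mk0, Units.val_one, OneMemClass.coe_one, mul_one]
        exact div_self hfγ
      map_mul' := by
        intro β β'
        ext
        simp only [Units.val_mk0, Units.val_mul]
        rw [div_mul_div_comm, div_eq_div_iff hfγ (mul_ne_zero hfγ hfγ)]
        have := hom β β'
        push_cast at this ⊢
        linear_combination this * f.coeff γ },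
    Units.mk0 (f.coeff γ) hfγ, hSset, ?_⟩
  · intro β
    simp only [MonoidHom.coe_mk, OneHom.coe_mk, Units.val_mk0]
    field_simp

theorem stmt13 {G F : Type*} [Group G] [Fintype G] [Field F]
    (f : MonoidAlgebra F G) (hf : f ≠ 0) :
    f.coeff.support.card *
        Module.finrank F
          ((Submodule.span (MonoidAlgebra F G) {f}).restrictScalars F)
      = Fintype.card G ↔
    ∃ (H : Subgroup G) (γ : G) (η : H →* Fˣ) (c : Fˣ),
      (f.coeff.support : Set G) = γ • (H : Set G) ∧
      ∀ β : H, f.coeff (γ * β) = (c : F) * (η β : F) := by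
  constructor
  · intro h
    exact forward_lemma f hf h
  · rintro ⟨H, γ, η, c, h1, h2⟩
    exact converse_lemma f hf H γ η c h1 h2
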